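/- Let ϑ > 1, n ≥ 1, and let (λ_k), (μ_k) be sequences with ϑ^{-1}k^{2/n} ≤ λ_k, μ_k ≤ ϑ k^{2/n}. Fix integers j ≥ 2 and m ≥ 0 and set d_k = ∫₀^λ s^{j-1}/(λ_k+s)^{j+m+1} ds and e_k = ∫₀^λ s^{j-1}/(μ_k+s)^{j+m+1} ds for λ > 0. Then |d_k − e_k| ≤ j(j+m+1)2^{j-1}·ϑ^{m+2}·k^{-2(m+2)/n}·|λ_k − μ_k| for all k ≥ 1. -/

import Mathlib

open intervalIntegral MeasureTheory

lemma pow_sub_pow_le_aux {y x : ℝ} (hy : 0 ≤ y) (hxy : y ≤ x) (N : ℕ) :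
    x ^ N - y ^ N ≤ N * x ^ (N - 1) * (x - y) := by
  have hx : 0 ≤ x := hy.trans hxy
  rw [← geom_sum₂_mul]
  have hsum : (∑ i ∈ Finset.range N, x ^ i * y ^ (N - 1 - i)) ≤ N * x ^ (N - 1) := by
    calc (∑ i ∈ Finset.range N, x ^ i * y ^ (N - 1 - i))
        ≤ ∑ _i ∈ Finset.range N, x ^ (N - 1) := by
          apply Finset.sum_le_sum
          intro i hi
          simp only [Finset.mem_range] at hi
          calc x ^ i * y ^ (N - 1 - i) ≤ x ^ i * x ^ (N - 1 - i) :=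
                mul_le_mul_of_nonneg_left (pow_le_pow_left₀ hy hxy _) (pow_nonneg hx _)
            _ = x ^ (i + (N - 1 - i)) := (pow_add x _ _).symm
            _ = x ^ (N - 1) := by congr 1; omega
      _ = N * x ^ (N - 1) := by simp [Finset.sum_const, nsmul_eq_mul]
  exact mul_le_mul_of_nonneg_right hsum (by linarith)

lemma integrable_aux (j p : ℕ) (c lam : ℝ) (hc : 0 < c) (hlam : 0 ≤ lam) :
    IntervalIntegrable (fun s : ℝ => s ^ (j - 1) / (c + s) ^ p) volume 0 lam := by
  apply ContinuousOn.intervalIntegrable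
  apply ContinuousOn.div (by fun_prop) (by fun_prop)
  intro s hs
  rw [Set.uIcc_of_le hlam] at hs
  have : 0 < c + s := by have := hs.1; linarith
  positivity

lemma key_lemma (j m : ℕ) (hj : 1 ≤ j) (a b lam : ℝ) (ha : 0 < a) (hab : a ≤ b)
    (hlam : 0 < lam) :
    |(∫ s in (0:ℝ)..lam, s ^ (j - 1) / (a + s) ^ (j + m + 1)) -
        ∫ s in (0:ℝ)..lam, s ^ (j - 1) / (b + s) ^ (j + m + 1)| ≤
      ((j : ℝ) + m + 1) * (b - a) / a ^ (m + 2) := by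
  have hb : 0 < b := ha.trans_le hab
  set N := j + m + 1 with hN
  have hN1 : 1 ≤ N := by omega
  have hia := integrable_aux j N a lam ha hlam.le
  have hib := integrable_aux j N b lam hb hlam.le
  -- the bound function
  set B : ℝ → ℝ := fun s => (N : ℝ) * (b - a) / (a + s) ^ (m + 3) with hB
  have hiB : IntervalIntegrable B volume 0 lam := by
    apply ContinuousOn.intervalIntegrable
    apply ContinuousOn.div (by fun_prop) (by fun_prop)
    intro s hs
    rw [Set.uIcc_of_le hlam.le] at hs
    have : 0 < a + s := by have := hs.1; linarith
    positivity
  rw [← intervalIntegral.integral_sub hia hib]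
  -- pointwise bound
  have hpt : ∀ t ∈ Set.uIoc (0:ℝ) lam,
      ‖t ^ (j - 1) / (a + t) ^ N - t ^ (j - 1) / (b + t) ^ N‖ ≤ B t := by
    intro t ht
    rw [Set.uIoc_of_le hlam.le] at ht
    obtain ⟨ht0, htl⟩ := ht
    set y := a + t with hy
    set x := b + t with hx
    have hy0 : 0 < y := by positivity
    have hx0 : 0 < x := by positivity
    have hyx : y ≤ x := by simp [hy, hx]; linarith
    have hty : t ≤ y := by simp [hy]; linarith
    have hnonneg : 0 ≤ t ^ (j-1) / y ^ N - t ^ (j-1) / x ^ N := by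
      apply sub_nonneg.mpr
      apply div_le_div_of_nonneg_left (by positivity) (by positivity)
      exact pow_le_pow_left₀ hy0.le hyx _
    rw [Real.norm_eq_abs, abs_of_nonneg hnonneg]
    have hrw : t ^ (j-1) / y ^ N - t ^ (j-1) / x ^ N
        = t ^ (j-1) * (x ^ N - y ^ N) / (y ^ N * x ^ N) := by
      field_simp
    rw [hrw, hB]
    rw [div_le_div_iff₀ (by positivity) (by positivity)]
    have hxy : x - y = b - a := by simp only [hx, hy]; ring
    have hpowadd : y ^ (j-1) * y ^ (m+3) = y ^ (N+1) := by
      rw [← pow_add]; congr 1; omega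
    have hpowx : x * x ^ (N-1) = x ^ N := by
      have h : N - 1 + 1 = N := by omega
      conv_rhs => rw [← h, pow_succ']
    calc t ^ (j-1) * (x ^ N - y ^ N) * (a + t) ^ (m+3)
        ≤ y ^ (j-1) * ((N : ℝ) * x ^ (N-1) * (x - y)) * y ^ (m+3) := by
          apply mul_le_mul_of_nonneg_right _ (by positivity)
          apply mul_le_mul (pow_le_pow_left₀ ht0.le hty _)
            (pow_sub_pow_le_aux hy0.le hyx N)
            (by nlinarith [pow_le_pow_left₀ hy0.le hyx N]) (by positivity)
      _ = ((N : ℝ) * (b - a)) * ((y ^ (j-1) * y ^ (m+3)) * x ^ (N-1)) := by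
          rw [hxy]; ring
      _ = ((N : ℝ) * (b - a)) * (y ^ (N+1) * x ^ (N-1)) := by rw [hpowadd]
      _ ≤ ((N : ℝ) * (b - a)) * (y ^ N * x ^ N) := by
          apply mul_le_mul_of_nonneg_left _ (mul_nonneg (by positivity) (by linarith))
          have h1 : y ^ (N+1) * x ^ (N-1) = y ^ N * (y * x ^ (N-1)) := by
            rw [pow_succ]; ring
          rw [h1]
          apply mul_le_mul_of_nonneg_left _ (by positivity)
          rw [← hpowx]
          exact mul_le_mul_of_nonneg_right hyx (by positivity)
  -- compute / bound the integral of B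
  set z : ℤ := -((m + 3 : ℕ) : ℤ) with hz
  have hval : ∫ s in (0:ℝ)..lam, B s
      = (N : ℝ) * (b - a) * (((a ^ (m+2))⁻¹ - ((a+lam) ^ (m+2))⁻¹) / ((m+2) : ℝ)) := by
    have e1 : ∫ s in (0:ℝ)..lam, B s
        = (N : ℝ) * (b - a) * ∫ s in (0:ℝ)..lam, (a + s) ^ z := by
      rw [← intervalIntegral.integral_const_mul]
      apply intervalIntegral.integral_congr
      intro s _
      simp only [hB, hz, zpow_neg, zpow_natCast, div_eq_mul_inv]
    rw [e1]
    have e2 : ∫ s in (0:ℝ)..lam, (a + s) ^ z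
        = ∫ u in (a + 0)..(a+lam), u ^ z :=
      intervalIntegral.integral_comp_add_left (fun u => u ^ z) a
    rw [e2]
    rw [integral_zpow]
    · have hz1 : z + 1 = -((m + 2 : ℕ) : ℤ) := by rw [hz]; push_cast; ring
      rw [hz1]
      have c1 : ((a + 0 : ℝ)) ^ (-((m + 2 : ℕ) : ℤ)) = (a ^ (m+2))⁻¹ := by
        rw [zpow_neg, zpow_natCast, add_zero]
      have c2 : ((a + lam : ℝ)) ^ (-((m + 2 : ℕ) : ℤ)) = ((a + lam) ^ (m+2))⁻¹ := by
        rw [zpow_neg, zpow_natCast]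
      rw [c1, c2]
      have hm2 : ((m : ℝ) + 2) ≠ 0 := by positivity
      have hcast : ((z : ℝ) + 1) = -((m : ℝ) + 2) := by rw [hz]; push_cast; ring
      rw [hcast]
      congr 1
      rw [div_neg, ← neg_div, neg_sub]
    · right
      constructor
      · rw [hz]; omega
      · rw [Set.uIcc_of_le (by linarith)]
        intro h
        have := h.1
        linarith
  calc ‖∫ s in (0:ℝ)..lam, (s ^ (j-1) / (a+s) ^ N - s ^ (j-1) / (b+s) ^ N)‖
      ≤ |∫ s in (0:ℝ)..lam, B s| := by
        apply intervalIntegral.norm_integral_le_abs_of_norm_le _ hiB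
        exact (MeasureTheory.ae_restrict_iff' measurableSet_uIoc).mpr
          (Filter.Eventually.of_forall hpt)
    _ ≤ ((j : ℝ) + m + 1) * (b - a) / a ^ (m + 2) := by
        rw [hval]
        have hP : 0 < ((a : ℝ) ^ (m+2))⁻¹ := by positivity
        have hQ : 0 < (((a+lam) : ℝ) ^ (m+2))⁻¹ := by positivity
        have hQP : (((a+lam) : ℝ) ^ (m+2))⁻¹ ≤ ((a : ℝ) ^ (m+2))⁻¹ := by
          apply inv_anti₀ (by positivity)
          exact pow_le_pow_left₀ ha.le (by linarith) _
        have hNb : 0 ≤ (N : ℝ) * (b - a) := by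
          apply mul_nonneg (by positivity)
          linarith
        have hmain : 0 ≤ (N : ℝ) * (b - a) *
            (((a ^ (m+2))⁻¹ - ((a+lam) ^ (m+2))⁻¹) / ((m+2) : ℝ)) := by
          apply mul_nonneg hNb
          apply div_nonneg (by linarith) (by positivity)
        rw [abs_of_nonneg hmain]
        have hfrac : (((a ^ (m+2))⁻¹ - ((a+lam) ^ (m+2))⁻¹) / ((m+2) : ℝ))
            ≤ (a ^ (m+2))⁻¹ := by
          rw [div_le_iff₀ (by positivity)]
          nlinarith
        calc (N : ℝ) * (b - a) * (((a ^ (m+2))⁻¹ - ((a+lam) ^ (m+2))⁻¹) / ((m+2) : ℝ))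
            ≤ (N : ℝ) * (b - a) * (a ^ (m+2))⁻¹ := mul_le_mul_of_nonneg_left hfrac hNb
          _ = ((j : ℝ) + m + 1) * (b - a) / a ^ (m + 2) := by
              rw [hN]; push_cast; ring

theorem stmt16 (n : ℕ) (hn : 1 ≤ n) (ϑ : ℝ) (hϑ : 1 < ϑ) (lamk muk : ℕ → ℝ)
    (hl : ∀ k : ℕ, ϑ⁻¹ * ((k : ℝ) + 1) ^ ((2 : ℝ) / n) ≤ lamk k ∧
        lamk k ≤ ϑ * ((k : ℝ) + 1) ^ ((2 : ℝ) / n))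
    (hm : ∀ k : ℕ, ϑ⁻¹ * ((k : ℝ) + 1) ^ ((2 : ℝ) / n) ≤ muk k ∧
        muk k ≤ ϑ * ((k : ℝ) + 1) ^ ((2 : ℝ) / n))
    (j m : ℕ) (hj : 2 ≤ j) (lam : ℝ) (hlam : 0 < lam) (k : ℕ) :
    |(∫ s in (0:ℝ)..lam, s ^ (j - 1) / (lamk k + s) ^ (j + m + 1)) -
        ∫ s in (0:ℝ)..lam, s ^ (j - 1) / (muk k + s) ^ (j + m + 1)| ≤
      (j : ℝ) * ((j : ℝ) + (m : ℝ) + 1) * 2 ^ (j - 1) * ϑ ^ (m + 2) *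
        ((k : ℝ) + 1) ^ (-(2 * ((m : ℝ) + 2)) / n) * |lamk k - muk k| := by
  set K : ℝ := ((k : ℝ) + 1) ^ ((2 : ℝ) / n) with hK
  have hKpos : 0 < K := Real.rpow_pos_of_pos (by positivity) _
  have hϑ0 : 0 < ϑ := lt_trans one_pos hϑ
  have hc : 0 < ϑ⁻¹ * K := by positivity
  set a := lamk k with hadef
  set b := muk k with hbdef
  have hal : ϑ⁻¹ * K ≤ a := (hl k).1
  have hbl : ϑ⁻¹ * K ≤ b := (hm k).1
  have ha : 0 < a := lt_of_lt_of_le hc hal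
  have hb : 0 < b := lt_of_lt_of_le hc hbl
  -- rewrite the rpow factor
  have hrpow : ((k : ℝ) + 1) ^ (-(2 * ((m : ℝ) + 2)) / n) = (K ^ (m + 2))⁻¹ := by
    have h1 : (-(2 * ((m : ℝ) + 2)) / n) = ((2 : ℝ) / n) * (-((m : ℝ) + 2)) := by
      ring
    rw [h1, Real.rpow_mul (by positivity), ← hK, Real.rpow_neg hKpos.le]
    congr 1
    rw [show ((m : ℝ) + 2) = ((m + 2 : ℕ) : ℝ) by push_cast; ring, Real.rpow_natCast]
  rw [hrpow]
  -- step 1: reduce to the minimum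
  set c := min a b with hcdef
  have hcpos : 0 < c := lt_min ha hb
  have hcl : ϑ⁻¹ * K ≤ c := le_min hal hbl
  have hstep1 : |(∫ s in (0:ℝ)..lam, s ^ (j - 1) / (a + s) ^ (j + m + 1)) -
      ∫ s in (0:ℝ)..lam, s ^ (j - 1) / (b + s) ^ (j + m + 1)| ≤
      ((j : ℝ) + m + 1) * |a - b| / c ^ (m + 2) := by
    rcases le_total a b with hab | hab
    · have e : |a - b| = b - a := by
        rw [abs_of_nonpos (by linarith : a - b ≤ 0), neg_sub]
      rw [hcdef, min_eq_left hab, e]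
      exact key_lemma j m (by omega) a b lam ha hab hlam
    · have e : |a - b| = a - b := abs_of_nonneg (by linarith)
      rw [hcdef, min_eq_right hab, e, abs_sub_comm]
      exact key_lemma j m (by omega) b a lam hb hab hlam
  refine hstep1.trans ?_
  -- step 2: estimate constants
  have hcp : (ϑ⁻¹ * K) ^ (m + 2) ≤ c ^ (m + 2) := pow_le_pow_left₀ hc.le hcl _
  have hinv : (c ^ (m + 2))⁻¹ ≤ ϑ ^ (m + 2) * (K ^ (m + 2))⁻¹ := by
    have h2 : (ϑ⁻¹ * K) ^ (m + 2) = (ϑ ^ (m + 2))⁻¹ * K ^ (m + 2) := by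
      rw [mul_pow, inv_pow]
    calc (c ^ (m + 2))⁻¹ ≤ ((ϑ⁻¹ * K) ^ (m + 2))⁻¹ :=
          inv_anti₀ (by positivity) hcp
      _ = ϑ ^ (m + 2) * (K ^ (m + 2))⁻¹ := by
          rw [h2, mul_inv, inv_inv]
  have hj2 : (1 : ℝ) ≤ (j : ℝ) * 2 ^ (j - 1) := by
    have h1 : (1 : ℝ) ≤ (j : ℝ) := by exact_mod_cast Nat.one_le_of_lt hj
    have h2 : (1 : ℝ) ≤ (2 : ℝ) ^ (j - 1) := one_le_pow₀ (by norm_num)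
    nlinarith
  have habs : 0 ≤ |a - b| := abs_nonneg _
  have hjm : 0 ≤ ((j : ℝ) + m + 1) := by positivity
  calc ((j : ℝ) + m + 1) * |a - b| / c ^ (m + 2)
      = ((j : ℝ) + m + 1) * |a - b| * (c ^ (m + 2))⁻¹ := by
        rw [div_eq_mul_inv]
    _ ≤ ((j : ℝ) + m + 1) * |a - b| * (ϑ ^ (m + 2) * (K ^ (m + 2))⁻¹) :=
        mul_le_mul_of_nonneg_left hinv (by positivity)
    _ ≤ ((j : ℝ) * 2 ^ (j - 1)) * (((j : ℝ) + m + 1) * |a - b| *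
          (ϑ ^ (m + 2) * (K ^ (m + 2))⁻¹)) := by
        nlinarith [mul_nonneg (mul_nonneg hjm habs)
          (mul_nonneg (pow_nonneg hϑ0.le (m+2)) (inv_nonneg.mpr (pow_nonneg hKpos.le (m+2))))]
    _ = (j : ℝ) * ((j : ℝ) + (m : ℝ) + 1) * 2 ^ (j - 1) * ϑ ^ (m + 2) *
          (K ^ (m + 2))⁻¹ * |a - b| := by ring
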